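/- If X has the same law as Z (with Z centered, having continuous density ρ_* on (l,u)), then g_X := E[⟨DX,-DL^{-1}X⟩_H | X] equals ∫_X^u y ρ_*(y) dy / ρ_*(X) almost surely; in particular g_X has the same law as g_Z, and hence E[g_X²] = E[g_Z²]. -/

import Mathlib

open MeasureTheory Set Filter

/-- If `X` has the same law as `Z` (centered, with continuous
density `ρ_*` on `(l,u)`), and `g_X` is `X`-measurable and satisfies the
integration-by-parts identity `E[f(X) g_X] = E[X F(X)]` for continuous,
compactly supported `f` with antiderivative `F`, then
`g_X = (∫_X^u y ρ_*(y) dy)/ρ_*(X)` a.s.; in particular `g_X` has the same law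
as `g_Z`, and `E[g_X²] = E[g_Z²]`. -/
theorem stmt11 {Ω : Type*} [MeasureSpace Ω]
    (hP : IsProbabilityMeasure (volume : Measure Ω))
    (X Z gX gZ : Ω → ℝ) (ρ : ℝ → ℝ) (l u : ℝ) (hl : l < 0) (hu : 0 < u)
    (hXmeas : Measurable X) (hZmeas : Measurable Z)
    (hgXmeas : Measurable gX) (hgZmeas : Measurable gZ)
    (hlaw : Measure.map X (volume : Measure Ω) = Measure.map Z volume)
    (hρcont : ContinuousOn ρ (Ioo l u))
    (hρpos : ∀ z ∈ Ioo l u, 0 < ρ z)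
    (hρzero : ∀ z ∉ Ioo l u, ρ z = 0)
    (hdens : ∀ s : Set ℝ, MeasurableSet s →
      Measure.map Z (volume : Measure Ω) s = ENNReal.ofReal (∫ y in s, ρ y))
    (hint : IntegrableOn (fun y => y * ρ y) (Ioo l u))
    (hmean : (∫ y in Ioo l u, y * ρ y) = 0)
    (ψ : ℝ → ℝ) (hψ : Measurable ψ) (hgX : gX = fun ω => ψ (X ω))
    (hIBP : ∀ f F : ℝ → ℝ, Continuous f → HasCompactSupport f →
      (∀ x, HasDerivAt F (f x) x) →
      (∫ ω, f (X ω) * gX ω) = ∫ ω, X ω * F (X ω))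
    (hgZdef : gZ =ᵐ[volume] fun ω => (∫ y in Ioo (Z ω) u, y * ρ y) / ρ (Z ω))
    (hgXsq : Integrable (fun ω => (gX ω) ^ 2))
    (hgZsq : Integrable (fun ω => (gZ ω) ^ 2)) :
    (gX =ᵐ[volume] fun ω => (∫ y in Ioo (X ω) u, y * ρ y) / ρ (X ω)) ∧
    Measure.map gX (volume : Measure Ω) = Measure.map gZ volume ∧
    (∫ ω, (gX ω) ^ 2) = ∫ ω, (gZ ω) ^ 2 := by
  classical
  have hlu : l < u := hl.trans hu
  -- basic facts about ρ
  have hρnonneg : ∀ y, 0 ≤ ρ y := by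
    intro y
    by_cases hy : y ∈ Ioo l u
    · exact (hρpos y hy).le
    · rw [hρzero y hy]
  have hρmeas : Measurable ρ := by
    have h : ρ = (Ioo l u).piecewise ρ (fun _ => 0) := by
      funext y; by_cases hy : y ∈ Ioo l u
      · simp [Set.piecewise, hy]
      · simp [Set.piecewise, hy, hρzero y hy]
    rw [h]
    exact ContinuousOn.measurable_piecewise hρcont continuousOn_const measurableSet_Ioo
  -- the function y ↦ y * ρ y
  set f₀ : ℝ → ℝ := fun y => y * ρ y with hf₀
  have hf₀meas : Measurable f₀ := measurable_id.mul hρmeas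
  have hf₀zero : ∀ y ∉ Ioo l u, f₀ y = 0 := fun y hy => by
    simp [hf₀, hρzero y hy]
  have hf₀int : Integrable f₀ := by
    have h : f₀ = (Ioo l u).indicator f₀ := by
      funext y; by_cases hy : y ∈ Ioo l u
      · rw [indicator_of_mem hy]
      · rw [indicator_of_notMem hy, hf₀zero y hy]
    rw [h]
    exact (integrable_indicator_iff measurableSet_Ioo).2 hint
  -- the primitive Φ
  set Φ : ℝ → ℝ := fun x => ∫ t in x..u, f₀ t with hΦ
  have hΦcont : Continuous Φ := by
    have h1 : Continuous fun x => ∫ t in u..x, f₀ t :=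
      intervalIntegral.continuous_primitive (fun a b => hf₀int.intervalIntegrable) u
    have h : Φ = fun x => -∫ t in u..x, f₀ t := by
      funext x; exact intervalIntegral.integral_symm u x
    rw [h]; exact h1.neg
  have hΦIoo : ∀ x, (∫ y in Ioo x u, y * ρ y) = Φ x := by
    intro x
    rcases le_or_gt u x with hx | hx
    · have h0 : Φ x = 0 := by
        rw [hΦ]
        simp only []
        rw [intervalIntegral.integral_symm, intervalIntegral.integral_of_le hx,
          setIntegral_eq_zero_of_forall_eq_zero (fun y hy => hf₀zero y
            (fun hmem => absurd hy.1 (not_lt.2 hmem.2.le))), neg_zero]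
      rw [Ioo_eq_empty (not_lt.2 hx), Measure.restrict_empty, integral_zero_measure, h0]
    · rw [hΦ]
      simp only []
      rw [intervalIntegral.integral_of_le hx.le, integral_Ioc_eq_integral_Ioo]
  have hΦzero : ∀ x ∉ Ioo l u, Φ x = 0 := by
    intro x hx
    rcases le_or_gt x l with hxl | hxl
    · have h1 : (∫ t in x..l, f₀ t) + (∫ t in l..u, f₀ t) = Φ x :=
        intervalIntegral.integral_add_adjacent_intervals hf₀int.intervalIntegrable
          hf₀int.intervalIntegrable
      have h2 : (∫ t in x..l, f₀ t) = 0 := by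
        rw [intervalIntegral.integral_of_le hxl]
        exact setIntegral_eq_zero_of_forall_eq_zero fun y hy =>
          hf₀zero y (fun hmem => absurd hy.2 (not_le.2 hmem.1))
      have h3 : (∫ t in l..u, f₀ t) = 0 := by
        rw [intervalIntegral.integral_of_le hlu.le, integral_Ioc_eq_integral_Ioo]
        exact hmean
      rw [← h1, h2, h3, add_zero]
    · have hux : u ≤ x := by
        by_contra hc; push_neg at hc; exact hx ⟨hxl, hc⟩
      rw [← hΦIoo x, Ioo_eq_empty (not_lt.2 hux), Measure.restrict_empty,
        integral_zero_measure]
  -- the law of Z as a density measure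
  have hprob : IsProbabilityMeasure (Measure.map Z (volume : Measure Ω)) :=
    Measure.isProbabilityMeasure_map hZmeas.aemeasurable
  have hρint : Integrable ρ := by
    by_contra hc
    have h1 := hdens univ MeasurableSet.univ
    rw [measure_univ, setIntegral_univ, integral_undef hc] at h1
    simp at h1
  have hμ : Measure.map Z (volume : Measure Ω)
      = (volume : Measure ℝ).withDensity (fun y => ENNReal.ofReal (ρ y)) := by
    ext s hs
    rw [hdens s hs, withDensity_apply _ hs,
      ofReal_integral_eq_lintegral_ofReal hρint.integrableOn
        (ae_of_all _ fun y => hρnonneg y)]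
  -- change of variables
  have hCoV : ∀ g : ℝ → ℝ, Measurable g → (∫ ω, g (X ω)) = ∫ y, g y * ρ y := by
    intro g hg
    have h1 : (∫ ω, g (X ω)) = ∫ y, g y ∂(Measure.map X (volume : Measure Ω)) :=
      (integral_map hXmeas.aemeasurable hg.aestronglyMeasurable).symm
    rw [h1, hlaw, hμ]
    have h2 : (volume : Measure ℝ).withDensity (fun y => ENNReal.ofReal (ρ y))
        = (volume : Measure ℝ).withDensity (fun y => (((ρ y).toNNReal : NNReal) : ENNReal)) :=
      rfl
    rw [h2, integral_withDensity_eq_integral_smul hρmeas.real_toNNReal g]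
    congr 1; funext y
    rw [NNReal.smul_def, Real.coe_toNNReal _ (hρnonneg y), smul_eq_mul, mul_comm]
  -- integrability of ψ·ρ
  have hgXint : Integrable gX :=
    ((memLp_two_iff_integrable_sq hgXmeas.aestronglyMeasurable).2 hgXsq).integrable one_le_two
  have hψρint : Integrable (fun y => ψ y * ρ y) := by
    have h1 : Integrable (fun ω => ψ (X ω)) (volume : Measure Ω) := by rwa [hgX] at hgXint
    have h2 : Integrable ψ (Measure.map X (volume : Measure Ω)) :=
      (integrable_map_measure hψ.aestronglyMeasurable hXmeas.aemeasurable).2 h1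
    rw [hlaw, hμ] at h2
    have h3 := (integrable_withDensity_iff (ENNReal.measurable_ofReal.comp hρmeas)
      (ae_of_all _ fun y => ENNReal.ofReal_lt_top)).1 h2
    have h4 : (fun y => ψ y * ρ y) = fun y => ψ y * (ENNReal.ofReal (ρ y)).toReal := by
      funext y; rw [ENNReal.toReal_ofReal (hρnonneg y)]
    rw [h4]; exact h3
  -- Φ is continuous with compact support, hence integrable
  have hΦsupp : HasCompactSupport Φ :=
    HasCompactSupport.intro isCompact_Icc fun x hx =>
      hΦzero x (fun hmem => hx ⟨hmem.1.le, hmem.2.le⟩)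
  have hΦint : Integrable Φ := hΦcont.integrable_of_hasCompactSupport hΦsupp
  -- the key integration by parts identity
  have hkey : ∀ g : ℝ → ℝ, Continuous g → HasCompactSupport g →
      (∫ y, g y * (ψ y * ρ y)) = ∫ y, g y * Φ y := by
    intro g hgc hgs
    set F : ℝ → ℝ := fun x => ∫ t in (0:ℝ)..x, g t with hF
    have hFd : ∀ x, HasDerivAt F (g x) x := fun x =>
      intervalIntegral.integral_hasDerivAt_right (hgc.intervalIntegrable 0 x)
        (hgc.stronglyMeasurableAtFilter _ _) hgc.continuousAt
    have hFc : Continuous F := by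
      rw [continuous_iff_continuousAt]; exact fun x => (hFd x).continuousAt
    have hibp := hIBP g F hgc hgs hFd
    -- rewrite the left side
    have hL : (∫ ω, g (X ω) * gX ω) = ∫ y, g y * (ψ y * ρ y) := by
      simp only [hgX]
      have h := hCoV (fun y => g y * ψ y) (hgc.measurable.mul hψ)
      simp only [mul_assoc] at h ⊢
      exact h
    -- rewrite the right side
    have hR : (∫ ω, X ω * F (X ω)) = ∫ y, F y * f₀ y := by
      have h := hCoV (fun y => y * F y) (measurable_id.mul hFc.measurable)
      rw [h]
      congr 1; funext y; rw [hf₀]; ring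
    -- restrict both integrals to (l,u)
    have hR2 : (∫ y, F y * f₀ y) = ∫ t in l..u, F t * f₀ t := by
      rw [intervalIntegral.integral_of_le hlu.le, integral_Ioc_eq_integral_Ioo,
        setIntegral_eq_integral_of_forall_compl_eq_zero
          (fun y hy => by rw [hf₀zero y hy, mul_zero])]
    have hL2 : (∫ y, g y * Φ y) = ∫ t in l..u, g t * Φ t := by
      rw [intervalIntegral.integral_of_le hlu.le, integral_Ioc_eq_integral_Ioo,
        setIntegral_eq_integral_of_forall_compl_eq_zero
          (fun y hy => by rw [hΦzero y hy, mul_zero])]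
    -- interval integration by parts on [l,u]
    have hΦderiv : ∀ x ∈ Ioo l u, HasDerivAt Φ (-(f₀ x)) x := by
      intro x hx
      have hcρ : ContinuousAt ρ x := hρcont.continuousAt (Ioo_mem_nhds hx.1 hx.2)
      have hcf : ContinuousAt f₀ x := continuousAt_id.mul hcρ
      exact intervalIntegral.integral_hasDerivAt_left hf₀int.intervalIntegrable
        ⟨univ, univ_mem, hf₀meas.aestronglyMeasurable.restrict⟩ hcf
    have hGderiv : ∀ x ∈ Ioo l u,
        HasDerivAt (fun t => F t * Φ t) (g x * Φ x - F x * f₀ x) x := by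
      intro x hx
      have h := (hFd x).mul (hΦderiv x hx)
      have h2 : HasDerivAt (F * Φ) (g x * Φ x - F x * f₀ x) x := by
        simpa [mul_neg, sub_eq_add_neg] using h
      exact h2
    have hintFf₀ : IntervalIntegrable (fun x => F x * f₀ x) volume l u := by
      apply MeasureTheory.IntegrableOn.intervalIntegrable
      rw [uIcc_of_le hlu.le]
      exact IntegrableOn.continuousOn_mul hFc.continuousOn hf₀int.integrableOn isCompact_Icc
    have hintgΦ : IntervalIntegrable (fun x => g x * Φ x) volume l u :=
      (hgc.mul hΦcont).intervalIntegrable l u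
    have hint' : IntervalIntegrable (fun x => g x * Φ x - F x * f₀ x) volume l u :=
      hintgΦ.sub hintFf₀
    have hfund := intervalIntegral.integral_eq_sub_of_hasDeriv_right_of_le hlu.le
      ((hFc.mul hΦcont).continuousOn)
      (fun x hx => (hGderiv x hx).hasDerivWithinAt) hint'
    have hΦu : Φ u = 0 := hΦzero u (fun h => lt_irrefl u h.2)
    have hΦl : Φ l = 0 := hΦzero l (fun h => lt_irrefl l h.1)
    rw [Pi.mul_apply, Pi.mul_apply, hΦu, hΦl, mul_zero, mul_zero, sub_zero] at hfund
    have hsplit : (∫ t in l..u, g t * Φ t) - (∫ t in l..u, F t * f₀ t) = 0 := by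
      rw [← intervalIntegral.integral_sub hintgΦ hintFf₀]; exact hfund
    have hIBPlu : (∫ t in l..u, F t * f₀ t) = ∫ t in l..u, g t * Φ t := by linarith
    rw [← hL, hibp, hR, hR2, hIBPlu, ← hL2]
  -- orthogonality to all smooth compactly supported functions
  have hloc : LocallyIntegrable (fun y => ψ y * ρ y - Φ y) volume :=
    (hψρint.sub hΦint).locallyIntegrable
  have hae0 : ∀ᵐ y : ℝ, ψ y * ρ y - Φ y = 0 := by
    apply ae_eq_zero_of_integral_contDiff_smul_eq_zero hloc
    intro g hgsm hgsupp
    have hgc : Continuous g := hgsm.continuous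
    have h1 := hkey g hgc hgsupp
    obtain ⟨C, hC⟩ := hgsupp.exists_bound_of_continuous hgc
    have hint1 : Integrable (fun y => g y * (ψ y * ρ y)) :=
      hψρint.bdd_mul hgc.aestronglyMeasurable (ae_of_all _ hC)
    have hint2 : Integrable (fun y => g y * Φ y) :=
      (hgc.mul hΦcont).integrable_of_hasCompactSupport (hgsupp.mul_right)
    have h2 : (fun y => g y • (ψ y * ρ y - Φ y))
        = fun y => g y * (ψ y * ρ y) - g y * Φ y := by
      funext y; rw [smul_eq_mul]; ring
    rw [h2, integral_sub hint1 hint2, h1, sub_self]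
  -- conclusion 1
  have hψeq : ∀ᵐ y ∂(Measure.map X (volume : Measure Ω)), ψ y = Φ y / ρ y := by
    rw [hlaw, hμ, ae_withDensity_iff (show Measurable fun y => ENNReal.ofReal (ρ y) from ENNReal.measurable_ofReal.comp hρmeas)]
    filter_upwards [hae0] with y hy hne
    have hρy : ρ y ≠ 0 := by
      intro h0; apply hne; rw [h0]; simp
    rw [eq_div_iff hρy]; linarith
  have hconc1 : gX =ᵐ[volume] fun ω => (∫ y in Ioo (X ω) u, y * ρ y) / ρ (X ω) := by
    have h1 : ∀ᵐ ω : Ω, ψ (X ω) = Φ (X ω) / ρ (X ω) :=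
      ae_of_ae_map hXmeas.aemeasurable hψeq
    filter_upwards [h1] with ω hω
    simp only [hgX]
    rw [hΦIoo (X ω)]
    exact hω
  -- conclusion 2
  set φf : ℝ → ℝ := fun y => Φ y / ρ y with hφf
  have hφmeas : Measurable φf := hΦcont.measurable.div hρmeas
  have hgXφ : gX =ᵐ[volume] φf ∘ X := by
    filter_upwards [hconc1] with ω hω
    rw [hω]
    simp only [Function.comp_apply, hφf, hΦIoo (X ω)]
  have hgZφ : gZ =ᵐ[volume] φf ∘ Z := by
    filter_upwards [hgZdef] with ω hω
    rw [hω]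
    exact congrArg (fun v => v / ρ (Z ω)) (hΦIoo (Z ω))
  have hconc2 : Measure.map gX (volume : Measure Ω) = Measure.map gZ volume := by
    calc Measure.map gX (volume : Measure Ω)
        = Measure.map (φf ∘ X) volume := Measure.map_congr hgXφ
      _ = Measure.map φf (Measure.map X volume) := (Measure.map_map hφmeas hXmeas).symm
      _ = Measure.map φf (Measure.map Z volume) := by rw [hlaw]
      _ = Measure.map (φf ∘ Z) volume := Measure.map_map hφmeas hZmeas
      _ = Measure.map gZ volume := (Measure.map_congr hgZφ).symm
  -- conclusion 3
  have hsqmeas : AEStronglyMeasurable (fun x : ℝ => x ^ 2)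
      (Measure.map gX (volume : Measure Ω)) :=
    (measurable_id.pow_const 2).aestronglyMeasurable
  have hsqmeas' : AEStronglyMeasurable (fun x : ℝ => x ^ 2)
      (Measure.map gZ (volume : Measure Ω)) :=
    (measurable_id.pow_const 2).aestronglyMeasurable
  have hconc3 : (∫ ω, (gX ω) ^ 2) = ∫ ω, (gZ ω) ^ 2 := by
    have h1 : (∫ ω, (gX ω) ^ 2) = ∫ x, x ^ 2 ∂(Measure.map gX (volume : Measure Ω)) :=
      (integral_map hgXmeas.aemeasurable hsqmeas).symm
    have h2 : (∫ ω, (gZ ω) ^ 2) = ∫ x, x ^ 2 ∂(Measure.map gZ (volume : Measure Ω)) :=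
      (integral_map hgZmeas.aemeasurable hsqmeas').symm
    rw [h1, h2, hconc2]
  exact ⟨hconc1, hconc2, hconc3⟩
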